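/- Let n ≥ 1. For every x : Fin n × Fin n → ℝ ∪ {∞}: the minimum, over all permutations σ of Fin n that consist of a single cycle of length n, of Σᵢ x_{i,σ(i)}, equals the minimum over all Boolean matrices Y : Fin n × Fin n → {∞,0} of the quantity P(Y) + Σ_{u,v ∈ Fin n} ( min_{0 ≤ k < n} (Y^k)_{u,v} ) + Σ_{i ∈ Fin n} min_{t ∈ Fin n} ( x_{i,t} + Y_{i,t} ), where Y^k denotes the k-th power of Y as a matrix over the min-plus semiring (Y⁰ being the min-plus identity matrix, with 0 on the diagonal and ∞ off the diagonal), and P(Y) := Σ_{i} (min_{j} Y_{i,j}) + Σ min( Ȳ_{a,b}, Ȳ_{c,d} ), the latter sum over all unordered pairs of distinct positions (a,b) ≠ (c,d) with a = c or b = d. (This is the hypercube-sum expression placing the Hamiltonian cycle family in VNP over min-plus semirings.) -/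

import Mathlib

open MvPolynomial

/-- `𝖱`: the min-plus semiring on `ℝ ∪ {∞}`: tropical addition `+` is `min`
(additive identity `0 = ∞`) and tropical multiplication `*` is ordinary real
addition (multiplicative identity `1` = the real `0`). -/
abbrev TR : Type := Tropical (WithTop ℝ)

/-- The Boolean values of the min-plus semiring, indexed by `Bool`:
`true ↦ 0` (tropical `1`) and `false ↦ ∞` (tropical `0`).
The complement of `bv b` is `bv (!b)`. -/
def bv (S : Type) [Zero S] [One S] (b : Bool) : S := if b then 1 else 0

/-- `P(Y) := Σ_i (min_j Y_{i,j}) + Σ min(Ȳ_{a,b}, Ȳ_{c,d})`, the second sum ranging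
over all unordered pairs of distinct positions (represented by lexicographically
ordered pairs) lying in the same row (`a = c`) or the same column (`b = d`). -/
noncomputable def PY {n : ℕ} (Y : Fin n × Fin n → Bool) : TR :=
  (∏ i : Fin n, ∑ j : Fin n, bv TR (Y (i, j)))
  * ∏ p ∈ Finset.univ.filter
      (fun p : (Fin n × Fin n) × (Fin n × Fin n) =>
        toLex p.1 < toLex p.2 ∧ (p.1.1 = p.2.1 ∨ p.1.2 = p.2.2)),
      (bv TR (!(Y p.1)) + bv TR (!(Y p.2)))

/-- The Boolean matrix `Y` viewed as a matrix over the min-plus semiring, so that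
min-plus matrix powers `(TY Y) ^ k` make sense (with `(TY Y) ^ 0` the min-plus
identity matrix: `0` on the diagonal and `∞` off the diagonal). -/
def TY {n : ℕ} (Y : Fin n × Fin n → Bool) : Matrix (Fin n) (Fin n) TR :=
  fun i j => bv TR (Y (i, j))

open scoped Classical

/- auxiliary lemmas -/

lemma bv_eq_ite (b : Bool) : bv TR b = if b = true then 1 else 0 := by
  cases b <;> simp [bv]

lemma sum_ite01 {ι : Type*} (s : Finset ι) (P : ι → Prop) {_ : DecidablePred P} :
    (∑ j ∈ s, (if P j then (1:TR) else 0)) = if ∃ j ∈ s, P j then 1 else 0 := by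
  induction s using Finset.induction_on with
  | empty => simp
  | @insert a s h ih =>
    rw [Finset.sum_insert h, ih]
    by_cases h1 : P a <;> by_cases h2 : ∃ j ∈ s, P j <;>
      simp [h1, h2, Tropical.add_self]

lemma prod_ite01 {ι : Type*} (s : Finset ι) (P : ι → Prop) {_ : DecidablePred P} :
    (∏ j ∈ s, (if P j then (1:TR) else 0)) = if ∀ j ∈ s, P j then 1 else 0 := by
  induction s using Finset.induction_on with
  | empty => simp
  | @insert a s h ih =>
    rw [Finset.prod_insert h, ih]
    by_cases h1 : P a <;> by_cases h2 : ∀ j ∈ s, P j <;>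
      simp [h1, h2]

lemma ite01_mul (P : Prop) [Decidable P] (z : TR) :
    (if P then (1:TR) else 0) * z = if P then z else 0 := by
  by_cases h : P <;> simp [h]

lemma ite01_add (P Q : Prop) [Decidable P] [Decidable Q] :
    (if P then (1:TR) else 0) + (if Q then (1:TR) else 0) = if P ∨ Q then 1 else 0 := by
  by_cases h1 : P <;> by_cases h2 : Q <;> simp [h1, h2, Tropical.add_self]

lemma ite01_mul_ite01 (P Q : Prop) [Decidable P] [Decidable Q] :
    (if P then (1:TR) else 0) * (if Q then (1:TR) else 0) = if P ∧ Q then 1 else 0 := by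
  by_cases h1 : P <;> by_cases h2 : Q <;> simp [h1, h2]


lemma ite_congr' {α : Type*} {P Q : Prop} {_ : Decidable P} {_ : Decidable Q} (h : P ↔ Q) (a b : α) :
    (if P then a else b) = if Q then a else b := by
  by_cases hq : Q
  · rw [if_pos hq, if_pos (h.mpr hq)]
  · rw [if_neg hq, if_neg (fun hp => hq (h.mp hp))]

/-- condition for `PY Y = 1` -/
def PYCond {n : ℕ} (Y : Fin n × Fin n → Bool) : Prop :=
  (∀ i : Fin n, ∃ j : Fin n, Y (i, j) = true) ∧
  ∀ p ∈ Finset.univ.filter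
      (fun p : (Fin n × Fin n) × (Fin n × Fin n) =>
        toLex p.1 < toLex p.2 ∧ (p.1.1 = p.2.1 ∨ p.1.2 = p.2.2)),
    (¬ Y p.1 = true ∨ ¬ Y p.2 = true)

lemma PY_eq {n : ℕ} (Y : Fin n × Fin n → Bool) :
    PY Y = if PYCond Y then 1 else 0 := by
  unfold PY
  simp only [bv_eq_ite, ite01_add, sum_ite01, prod_ite01, ite01_mul_ite01]
  erw [prod_ite01, ite01_mul_ite01]
  by_cases h : PYCond Y
  · rw [if_pos h, if_pos ?_]
    constructor
    · intro i _
      obtain ⟨j, hj⟩ := h.1 i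
      exact ⟨j, Finset.mem_univ j, hj⟩
    · intro p hp
      rcases h.2 p hp with h' | h' <;> simp [h']
  · rw [if_neg h, if_neg ?_]
    intro hA
    apply h
    constructor
    · intro i
      obtain ⟨j, -, hj⟩ := hA.1 i (Finset.mem_univ i)
      exact ⟨j, hj⟩
    · intro p hp
      rcases hA.2 p hp with h' | h' <;> simp at h' <;> simp [h']

/-- the permutation matrix of `σ` -/
def permMat (n : ℕ) (σ : Equiv.Perm (Fin n)) : Fin n × Fin n → Bool :=
  fun p => decide (σ p.1 = p.2)

lemma permMat_inj (n : ℕ) : Function.Injective (permMat n) := by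
  intro σ τ h
  apply Equiv.ext
  intro i
  have := congrFun h (i, σ i)
  simp [permMat] at this
  exact this.symm

lemma lex_pair_row {n : ℕ} {i j j' : Fin n} (h : j < j') :
    toLex ((i,j) : Fin n × Fin n) < toLex (i,j') := by
  rw [Prod.Lex.lt_iff]; right; exact ⟨rfl, h⟩

lemma lex_pair_col {n : ℕ} {i i' j : Fin n} (h : i < i') :
    toLex ((i,j) : Fin n × Fin n) < toLex (i',j) := by
  rw [Prod.Lex.lt_iff]; left; exact h

/-- PYCond implies Y is a permutation matrix -/
lemma PYCond_perm {n : ℕ} (Y : Fin n × Fin n → Bool) (h : PYCond Y) :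
    ∃ σ : Equiv.Perm (Fin n), Y = permMat n σ := by
  obtain ⟨hrow, hpair⟩ := h
  have hpair' : ∀ p q : Fin n × Fin n, toLex p < toLex q → (p.1 = q.1 ∨ p.2 = q.2) →
      ¬(Y p = true ∧ Y q = true) := by
    rintro p q hlt hrc ⟨hp, hq⟩
    have := hpair (p, q) (by simp [hlt, hrc])
    rcases this with h | h
    · exact h hp
    · exact h hq
  have hrowu : ∀ i j j' : Fin n, Y (i,j) = true → Y (i,j') = true → j = j' := by
    intro i j j' hj hj'
    by_contra hne
    rcases lt_or_gt_of_ne hne with hlt | hlt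
    · exact hpair' (i,j) (i,j') (lex_pair_row hlt) (Or.inl rfl) ⟨hj, hj'⟩
    · exact hpair' (i,j') (i,j) (lex_pair_row hlt) (Or.inl rfl) ⟨hj', hj⟩
  have hcolu : ∀ i i' j : Fin n, Y (i,j) = true → Y (i',j) = true → i = i' := by
    intro i i' j hj hj'
    by_contra hne
    rcases lt_or_gt_of_ne hne with hlt | hlt
    · exact hpair' (i,j) (i',j) (lex_pair_col hlt) (Or.inr rfl) ⟨hj, hj'⟩
    · exact hpair' (i',j) (i,j) (lex_pair_col hlt) (Or.inr rfl) ⟨hj', hj⟩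
  have hex : ∀ i : Fin n, ∃! j : Fin n, Y (i,j) = true := by
    intro i
    obtain ⟨j, hj⟩ := hrow i
    exact ⟨j, hj, fun j' hj' => hrowu i j' j hj' hj⟩
  let f : Fin n → Fin n := fun i => Fintype.choose _ (hex i)
  have hf : ∀ i, Y (i, f i) = true := fun i => Fintype.choose_spec _ (hex i)
  have hinj : Function.Injective f := by
    intro i i' h
    exact hcolu i i' (f i) (hf i) (h ▸ hf i')
  let σ : Equiv.Perm (Fin n) := Equiv.ofBijective f (Finite.injective_iff_bijective.mp hinj)
  refine ⟨σ, ?_⟩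
  funext p
  obtain ⟨i, j⟩ := p
  show Y (i, j) = decide (σ (i,j).1 = (i,j).2)
  have hσ : σ i = f i := rfl
  by_cases h : Y (i, j) = true
  · have hj : j = f i := hrowu i j (f i) h (hf i)
    rw [h]
    symm
    simp [hσ, hj]
  · simp only [Bool.not_eq_true] at h
    have hne : ¬ (σ i = j) := by
      intro he
      rw [hσ] at he
      rw [← he] at h
      rw [hf i] at h
      exact Bool.noConfusion h
    rw [h]
    simp [hne]

/-- PYCond holds for permutation matrices -/
lemma PYCond_permMat {n : ℕ} (σ : Equiv.Perm (Fin n)) : PYCond (permMat n σ) := by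
  constructor
  · intro i; exact ⟨σ i, by simp [permMat]⟩
  · intro p hp
    simp only [Finset.mem_filter, Finset.mem_univ, true_and] at hp
    obtain ⟨hlt, hrc⟩ := hp
    by_contra hc
    push_neg at hc
    obtain ⟨h1, h2⟩ := hc
    simp only [permMat, decide_eq_true_eq] at h1 h2
    rcases hrc with h | h
    · have : p.1 = p.2 := Prod.ext h (by rw [← h1, ← h2, h])
      rw [this] at hlt; exact lt_irrefl _ hlt
    · have : p.1 = p.2 := Prod.ext (σ.injective (by rw [h1, h2, h])) h
      rw [this] at hlt; exact lt_irrefl _ hlt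

lemma TY_permMat_pow {n : ℕ} (σ : Equiv.Perm (Fin n)) (k : ℕ) :
    ∀ u v : Fin n, ((TY (permMat n σ)) ^ k) u v = if (σ ^ k) u = v then 1 else 0 := by
  induction k with
  | zero =>
    intro u v
    simp [Matrix.one_apply, pow_zero]
  | succ k ih =>
    intro u v
    rw [pow_succ]
    show (((TY (permMat n σ)) ^ k) * (TY (permMat n σ))) u v = _
    rw [Matrix.mul_apply]
    have key : ∀ j : Fin n, ((TY (permMat n σ)) ^ k) u j * (TY (permMat n σ)) j v
        = if ((σ ^ k) u = j ∧ σ j = v) then 1 else 0 := by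
      intro j
      rw [ih u j]
      show _ * bv TR (permMat n σ (j, v)) = _
      rw [bv_eq_ite]
      simp only [permMat, decide_eq_true_eq]
      rw [ite01_mul_ite01]
    rw [Finset.sum_congr rfl fun j _ => key j, sum_ite01]
    refine ite_congr' ?_ _ _
    simp only [Finset.mem_univ, true_and]
    constructor
    · rintro ⟨j, rfl, hj⟩
      rw [pow_succ']
      exact hj
    · intro hv
      exact ⟨(σ ^ k) u, rfl, by rw [← hv, pow_succ']; rfl⟩

lemma mid_term {n : ℕ} (σ : Equiv.Perm (Fin n)) :
    (∏ u : Fin n, ∏ v : Fin n, ∑ k ∈ Finset.range n, ((TY (permMat n σ)) ^ k) u v)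
    = if (∀ u v : Fin n, ∃ k < n, (σ ^ k) u = v) then 1 else 0 := by
  simp only [TY_permMat_pow, sum_ite01, prod_ite01]
  by_cases h : ∀ u v : Fin n, ∃ k < n, (σ ^ k) u = v
  · rw [if_pos h]
    apply Finset.prod_eq_one
    intro u _
    rw [if_pos ?_]
    intro v _
    obtain ⟨k, hk, hkv⟩ := h u v
    exact ⟨k, Finset.mem_range.mpr hk, hkv⟩
  · rw [if_neg h]
    push_neg at h
    obtain ⟨u, v, huv⟩ := h
    apply Finset.prod_eq_zero (Finset.mem_univ u)
    rw [if_neg ?_]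
    intro hall
    obtain ⟨k, hk, hkv⟩ := hall v (Finset.mem_univ v)
    exact huv k (Finset.mem_range.mp hk) hkv

lemma last_term {n : ℕ} (σ : Equiv.Perm (Fin n)) (x : Fin n × Fin n → TR) :
    (∏ i : Fin n, ∑ t : Fin n, x (i, t) * bv TR (permMat n σ (i, t)))
    = ∏ i : Fin n, x (i, σ i) := by
  refine Finset.prod_congr rfl fun i _ => ?_
  have key : ∀ t : Fin n, x (i, t) * bv TR (permMat n σ (i, t))
      = if σ i = t then x (i, t) else 0 := by
    intro t
    by_cases h : σ i = t <;> simp [permMat, bv, h]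
  rw [Finset.sum_congr rfl fun t _ => key t, Finset.sum_ite_eq Finset.univ (σ i) (fun t => x (i,t))]
  simp

/-- the minimum over all single-`n`-cycle permutations `σ` of
`Σᵢ x_{i,σ(i)}` equals the minimum over Boolean matrices `Y` of
`P(Y) + Σ_{u,v} (min_{0 ≤ k < n} (Y^k)_{u,v}) + Σᵢ min_t (x_{i,t} + Y_{i,t})`,
everything in the min-plus semiring (tropical `∑` = min, tropical `∏` = real
addition). A permutation consists of a single cycle of length `n` iff every `v`
lies in the orbit of every `u` under at most `n-1` applications of `σ`. -/
theorem stmt4 (n : ℕ) (hn : 1 ≤ n) (x : Fin n × Fin n → TR) :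
    (∑ σ ∈ Finset.univ.filter
        (fun σ : Equiv.Perm (Fin n) => ∀ u v : Fin n, ∃ k < n, (σ ^ k) u = v),
        ∏ i : Fin n, x (i, σ i))
    = ∑ Y : Fin n × Fin n → Bool,
        PY Y
        * (∏ u : Fin n, ∏ v : Fin n, ∑ k ∈ Finset.range n, (TY Y ^ k) u v)
        * ∏ i : Fin n, ∑ t : Fin n, x (i, t) * bv TR (Y (i, t)) := by
  classical
  have hzero : ∀ Y ∈ Finset.univ, Y ∉ Finset.univ.image (permMat n) →
      PY Y * (∏ u : Fin n, ∏ v : Fin n, ∑ k ∈ Finset.range n, (TY Y ^ k) u v)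
        * (∏ i : Fin n, ∑ t : Fin n, x (i, t) * bv TR (Y (i, t))) = 0 := by
    intro Y _ hY
    have hnc : ¬ PYCond Y := by
      intro hc
      obtain ⟨σ, rfl⟩ := PYCond_perm Y hc
      exact hY (Finset.mem_image.mpr ⟨σ, Finset.mem_univ σ, rfl⟩)
    rw [PY_eq, if_neg hnc, zero_mul, zero_mul]
  rw [← Finset.sum_subset (Finset.subset_univ (Finset.univ.image (permMat n))) hzero]
  rw [Finset.sum_image (fun σ _ τ _ h => permMat_inj n h)]
  rw [Finset.sum_filter]
  refine Finset.sum_congr rfl fun σ _ => ?_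
  rw [PY_eq, if_pos (PYCond_permMat σ), one_mul, mid_term, last_term, ite01_mul]
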